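/- Let A be an n×n real SPD matrix, M an n×n real matrix such that M + Mᵀ − A is SPD (hence M is invertible), and W an n×n real symmetric positive semidefinite matrix satisfying vᵀ W v ≤ γ · vᵀ A⁻¹ v for all v ∈ ℝⁿ, for some γ > 0. Then vᵀ (I − M⁻ᵀ A) W (I − A M⁻¹) v ≤ γ · vᵀ A⁻¹ v for all v ∈ ℝⁿ, where M⁻ᵀ denotes the inverse of the transpose of M. -/

import Mathlib

open Matrix

private lemma quad_helper {n : ℕ} (B X : Matrix (Fin n) (Fin n) ℝ) (w : Fin n → ℝ) :
    (B *ᵥ w) ⬝ᵥ X *ᵥ (B *ᵥ w) = w ⬝ᵥ (Bᵀ * X * B) *ᵥ w := by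
  rw [← mulVec_mulVec, ← mulVec_mulVec, dotProduct_mulVec w Bᵀ, vecMul_transpose,
    mulVec_mulVec]

/-- Conjugation by the A-convergent smoothing iteration operators does not
increase the upper spectral bound relative to A⁻¹. -/
theorem stmt_6 {n : ℕ}
    (A M W : Matrix (Fin n) (Fin n) ℝ) (hA : A.PosDef)
    (hM : (M + Mᵀ - A).PosDef) (hW : W.PosSemidef)
    (γ : ℝ) (hγ : 0 < γ)
    (hWbound : ∀ v : Fin n → ℝ, v ⬝ᵥ W.mulVec v ≤ γ * (v ⬝ᵥ A⁻¹.mulVec v)) :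
    ∀ v : Fin n → ℝ,
      v ⬝ᵥ ((1 - (Mᵀ)⁻¹ * A) * W * (1 - A * M⁻¹)).mulVec v ≤
        γ * (v ⬝ᵥ A⁻¹.mulVec v) := by
  have hAt : Aᵀ = A := by
    have := hA.1
    simpa [Matrix.IsHermitian, Matrix.conjTranspose_eq_transpose_of_trivial] using this
  -- M is invertible
  have hMunit : IsUnit M := by
    rw [← Matrix.mulVec_injective_iff_isUnit]
    intro x y hxy
    by_contra hne
    have hz : M *ᵥ (x - y) = 0 := by
      rw [mulVec_sub, hxy, sub_self]
    have hzne : x - y ≠ 0 := sub_ne_zero.mpr hne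
    have h1 := hM.dotProduct_mulVec_pos hzne
    have h2 := hA.dotProduct_mulVec_pos hzne
    simp only [RCLike.re_to_real, star_trivial] at h1 h2
    rw [sub_mulVec, add_mulVec, dotProduct_sub, dotProduct_add, hz, dotProduct_zero,
      dotProduct_mulVec, vecMul_transpose, hz, zero_dotProduct] at h1
    linarith
  have hMdet : IsUnit M.det := (Matrix.isUnit_iff_isUnit_det M).mp hMunit
  have hAdet : IsUnit A.det := (Matrix.isUnit_iff_isUnit_det A).mp hA.isUnit
  -- the key matrix identity
  have hkey : Mᵀ * A⁻¹ * M - (M - A)ᵀ * A⁻¹ * (M - A) = M + Mᵀ - A := by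
    have e1 : Mᵀ * A⁻¹ * A = Mᵀ := by
      rw [mul_assoc, Matrix.nonsing_inv_mul A hAdet, mul_one]
    have e2 : A * A⁻¹ * M = M := by
      rw [Matrix.mul_nonsing_inv A hAdet, one_mul]
    have e3 : A * A⁻¹ * A = A := by
      rw [Matrix.mul_nonsing_inv A hAdet, one_mul]
    have expand : (Mᵀ - A) * A⁻¹ * (M - A)
        = Mᵀ * A⁻¹ * M - Mᵀ * A⁻¹ * A - A * A⁻¹ * M + A * A⁻¹ * A := by
      noncomm_ring
    rw [transpose_sub, hAt, expand, e1, e2, e3]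
    noncomm_ring
  intro v
  set w : Fin n → ℝ := M⁻¹ *ᵥ v with hw
  have hv : M *ᵥ w = v := by
    rw [hw, mulVec_mulVec, Matrix.mul_nonsing_inv M hMdet, one_mulVec]
  set u : Fin n → ℝ := (1 - A * M⁻¹) *ᵥ v with hu
  have hu2 : u = (M - A) *ᵥ w := by
    rw [hu, sub_mulVec, one_mulVec, ← mulVec_mulVec, ← hw, ← hv, sub_mulVec]
  -- transpose fact
  have hT : (1 - A * M⁻¹)ᵀ = 1 - (Mᵀ)⁻¹ * A := by
    rw [transpose_sub, transpose_one, transpose_mul, hAt, transpose_nonsing_inv]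
  -- LHS equals u ⬝ᵥ W *ᵥ u
  have hLHS : v ⬝ᵥ ((1 - (Mᵀ)⁻¹ * A) * W * (1 - A * M⁻¹)) *ᵥ v = u ⬝ᵥ W *ᵥ u := by
    rw [← hT, ← quad_helper, ← hu]
  -- A⁻¹-norm does not increase
  have hdec : u ⬝ᵥ A⁻¹ *ᵥ u ≤ v ⬝ᵥ A⁻¹ *ᵥ v := by
    have h1 : v ⬝ᵥ A⁻¹ *ᵥ v = w ⬝ᵥ (Mᵀ * A⁻¹ * M) *ᵥ w := by
      rw [← hv, quad_helper]
    have h2 : u ⬝ᵥ A⁻¹ *ᵥ u = w ⬝ᵥ ((M - A)ᵀ * A⁻¹ * (M - A)) *ᵥ w := by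
      rw [hu2, quad_helper]
    have h3 : v ⬝ᵥ A⁻¹ *ᵥ v - u ⬝ᵥ A⁻¹ *ᵥ u = w ⬝ᵥ (M + Mᵀ - A) *ᵥ w := by
      rw [h1, h2, ← dotProduct_sub, ← sub_mulVec, hkey]
    have h4 : 0 ≤ w ⬝ᵥ (M + Mᵀ - A) *ᵥ w := by
      have := hM.posSemidef.dotProduct_mulVec_nonneg w
      simpa using this
    linarith
  calc v ⬝ᵥ ((1 - (Mᵀ)⁻¹ * A) * W * (1 - A * M⁻¹)) *ᵥ v = u ⬝ᵥ W *ᵥ u := hLHS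
    _ ≤ γ * (u ⬝ᵥ A⁻¹ *ᵥ u) := hWbound u
    _ ≤ γ * (v ⬝ᵥ A⁻¹ *ᵥ v) := by nlinarith
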